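/- Let X₁ ~ N(0,σ₁²) and X₂ ~ N(0,σ₂²) be independent centred normal random variables. Then the density of the product Z = X₁X₂ is f_Z(z) = (1/(π σ₁ σ₂)) · K₀(|z|/(σ₁σ₂)) for z ≠ 0, where K₀ is the modified Bessel function of the second kind of order 0. -/

import Mathlib

open MeasureTheory ProbabilityTheory Real
open scoped ENNReal NNReal

/-- The modified Bessel function of the second kind,
`K_ν(x) = ∫₀^∞ e^{−x cosh t} cosh(νt) dt`. -/
noncomputable def besselK (ν x : ℝ) : ℝ :=
  ∫ t in Set.Ioi (0 : ℝ), Real.exp (-x * Real.cosh t) * Real.cosh (ν * t)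


lemma besselK_zero_eq (x : ℝ) :
    besselK 0 x = ∫ t in Set.Ioi (0 : ℝ), Real.exp (-x * Real.cosh t) := by
  unfold besselK; simp

lemma integrableOn_exp_neg_cosh {β : ℝ} (hβ : 0 < β) :
    IntegrableOn (fun t => Real.exp (-β * Real.cosh t)) (Set.Ioi (0 : ℝ)) := by
  have hmain : IntegrableOn (fun t => Real.exp (-β/2) * Real.exp (-(β/2) * t)) (Set.Ioi (0:ℝ)) :=
    (exp_neg_integrableOn_Ioi 0 (by positivity)).const_mul _
  refine Integrable.mono' hmain ?_ ?_
  · exact ((continuous_exp.comp ((continuous_const.mul Real.continuous_cosh))).aestronglyMeasurable)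
  · filter_upwards [ae_restrict_mem measurableSet_Ioi] with t ht
    rw [Real.norm_eq_abs, abs_of_pos (Real.exp_pos _), ← Real.exp_add]
    apply Real.exp_le_exp.mpr
    have h1 : (1 + t) / 2 ≤ Real.cosh t := by
      have : Real.exp t ≤ 2 * Real.cosh t := by
        rw [Real.cosh_eq]; nlinarith [Real.exp_pos (-t)]
      nlinarith [Real.add_one_le_exp t]
    nlinarith

lemma lintegral_Ioi_exp_neg_cosh {β : ℝ} (hβ : 0 < β) :
    ∫⁻ t in Set.Ioi (0 : ℝ), ENNReal.ofReal (Real.exp (-β * Real.cosh t)) =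
      ENNReal.ofReal (besselK 0 β) := by
  rw [besselK_zero_eq,
    ← ofReal_integral_eq_lintegral_ofReal (integrableOn_exp_neg_cosh hβ)
      (Filter.Eventually.of_forall fun t => (Real.exp_pos _).le)]

lemma lintegral_image_eq_lintegral_abs_deriv_mul' {s : Set ℝ} {f f' : ℝ → ℝ}
    (hs : MeasurableSet s) (hf' : ∀ x ∈ s, HasDerivWithinAt f (f' x) s x) (hf : Set.InjOn f s)
    (g : ℝ → ℝ≥0∞) : ∫⁻ x in f '' s, g x = ∫⁻ x in s, ENNReal.ofReal |f' x| * g (f x) := by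
  simpa only [ContinuousLinearMap.det_toSpanSingleton] using
    lintegral_image_eq_lintegral_abs_det_fderiv_mul volume hs
      (fun x hx => (hf' x hx).hasFDerivWithinAt) hf g

lemma lintegral_real_exp_neg_cosh {β : ℝ} (hβ : 0 < β) :
    ∫⁻ t : ℝ, ENNReal.ofReal (Real.exp (-β * Real.cosh t)) =
      2 * ENNReal.ofReal (besselK 0 β) := by
  have hsplit := lintegral_add_compl (μ := volume)
    (fun t : ℝ => ENNReal.ofReal (Real.exp (-β * Real.cosh t))) (measurableSet_Ioi (a := (0:ℝ)))
  have hcompl : (Set.Ioi (0:ℝ))ᶜ = Set.Iic 0 := by simp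
  have hIic : ∫⁻ t in Set.Iic (0:ℝ), ENNReal.ofReal (Real.exp (-β * Real.cosh t)) =
      ∫⁻ t in Set.Ioi (0:ℝ), ENNReal.ofReal (Real.exp (-β * Real.cosh t)) := by
    have himg : Neg.neg '' Set.Ioi (0:ℝ) = Set.Iio 0 := by
      ext y; simp only [Set.mem_image, Set.mem_Ioi, Set.mem_Iio]
      constructor
      · rintro ⟨x, hx, rfl⟩; linarith
      · intro hy; exact ⟨-y, by linarith, by ring⟩
    have := lintegral_image_eq_lintegral_abs_deriv_mul' (f := Neg.neg) (f' := fun _ => (-1:ℝ))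
      (measurableSet_Ioi (a := (0:ℝ)))
      (fun x _ => (hasDerivAt_neg x).hasDerivWithinAt)
      (fun a _ b _ h => neg_injective h)
      (fun t => ENNReal.ofReal (Real.exp (-β * Real.cosh t)))
    rw [himg] at this
    rw [← setLIntegral_congr (Iio_ae_eq_Iic (a := (0:ℝ)))] at *
    rw [this]
    simp [Real.cosh_neg]
  rw [← hsplit, hcompl, hIic, lintegral_Ioi_exp_neg_cosh hβ, two_mul]

lemma lintegral_real_exp_neg_cosh_two_mul {β : ℝ} (hβ : 0 < β) :
    ∫⁻ t : ℝ, ENNReal.ofReal (Real.exp (-β * Real.cosh (2 * t))) =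
      ENNReal.ofReal (besselK 0 β) := by
  have himg : (fun t : ℝ => 2 * t) '' Set.univ = Set.univ := by
    rw [Set.image_univ]
    exact Set.range_eq_univ.mpr (fun y => ⟨y / 2, by ring⟩)
  have h := lintegral_image_eq_lintegral_abs_deriv_mul' (f := fun t : ℝ => 2 * t)
      (f' := fun _ => (2:ℝ)) MeasurableSet.univ
      (fun x _ => (by simpa using ((hasDerivAt_id x).const_mul (2:ℝ)) : HasDerivAt (fun t : ℝ => 2*t) 2 x).hasDerivWithinAt)
      (fun a _ b _ hab => by simpa using mul_left_cancel₀ (two_ne_zero (α := ℝ)) hab)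
      (fun t => ENNReal.ofReal (Real.exp (-β * Real.cosh t)))
  rw [himg] at h
  simp only [Measure.restrict_univ] at h
  rw [lintegral_real_exp_neg_cosh hβ] at h
  have h2 : ∀ t : ℝ, ENNReal.ofReal |(2:ℝ)| * ENNReal.ofReal (Real.exp (-β * Real.cosh (2*t)))
      = 2 * ENNReal.ofReal (Real.exp (-β * Real.cosh (2*t))) := by
    intro t; congr 1; rw [abs_of_pos]; · norm_num
    · norm_num
  simp only [h2] at h
  rw [lintegral_const_mul 2 (by fun_prop)] at h
  have h2ne : (2:ℝ≥0∞) ≠ 0 := by norm_num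
  have h2top : (2:ℝ≥0∞) ≠ ⊤ := by norm_num
  have := congrArg (fun x => 2⁻¹ * x) h
  simpa [← mul_assoc, ENNReal.inv_mul_cancel h2ne h2top] using this.symm

lemma lintegral_Ioi_subst {p q : ℝ} (hp : 0 < p) (hq : 0 < q) :
    ∫⁻ x in Set.Ioi (0:ℝ), ENNReal.ofReal (Real.exp (-(p*x^2) - q/x^2) * x⁻¹) =
      ∫⁻ t : ℝ, ENNReal.ofReal (Real.exp (-(2 * Real.sqrt (p*q)) * Real.cosh (2*t))) := by
  set c : ℝ := Real.sqrt (Real.sqrt (q / p)) with hc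
  have hc0 : 0 < c := Real.sqrt_pos.mpr (Real.sqrt_pos.mpr (by positivity))
  have hcsq : c^2 = Real.sqrt (q / p) := Real.sq_sqrt (Real.sqrt_nonneg _)
  have hpc : p * c^2 = Real.sqrt (p*q) := by
    have h1 : (p * c^2)^2 = p*q := by
      rw [hcsq, mul_pow, Real.sq_sqrt (by positivity : (0:ℝ) ≤ q/p)]
      field_simp
    rw [← h1, Real.sqrt_sq (by positivity)]
  have hqc : q / c^2 = Real.sqrt (p*q) := by
    have h1 : (q / c^2)^2 = p*q := by
      rw [hcsq, div_pow, Real.sq_sqrt (by positivity : (0:ℝ) ≤ q/p)]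
      field_simp
    rw [← h1, Real.sqrt_sq (by positivity)]
  have himg : (fun t : ℝ => c * Real.exp t) '' Set.univ = Set.Ioi 0 := by
    rw [Set.image_univ]
    ext y
    simp only [Set.mem_range, Set.mem_Ioi]
    constructor
    · rintro ⟨t, rfl⟩; positivity
    · intro hy
      exact ⟨Real.log (y / c), by rw [Real.exp_log (by positivity)]; field_simp⟩
  have h := lintegral_image_eq_lintegral_abs_deriv_mul'
      (f := fun t : ℝ => c * Real.exp t) (f' := fun t : ℝ => c * Real.exp t)
      MeasurableSet.univ
      (fun x _ => ((Real.hasDerivAt_exp x).const_mul c).hasDerivWithinAt)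
      (fun a _ b _ hab => Real.exp_injective (mul_left_cancel₀ hc0.ne' hab))
      (fun x => ENNReal.ofReal (Real.exp (-(p*x^2) - q/x^2) * x⁻¹))
  rw [himg] at h
  rw [h, Measure.restrict_univ]
  refine lintegral_congr fun t => ?_
  have hy : 0 < c * Real.exp t := by positivity
  rw [abs_of_pos hy, ← ENNReal.ofReal_mul hy.le]
  congr 1
  have hysq : (c * Real.exp t)^2 = c^2 * Real.exp (2*t) := by
    rw [mul_pow, sq (Real.exp t), ← Real.exp_add, two_mul]
  rw [mul_comm (c * Real.exp t), mul_assoc, inv_mul_cancel₀ hy.ne', mul_one, hysq]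
  congr 1
  have h1 : p * (c^2 * Real.exp (2*t)) = Real.sqrt (p*q) * Real.exp (2*t) := by
    rw [← mul_assoc, hpc]
  have h2 : q / (c^2 * Real.exp (2*t)) = Real.sqrt (p*q) * Real.exp (-(2*t)) := by
    rw [Real.exp_neg, div_mul_eq_div_div, hqc, div_eq_mul_inv]
  rw [h1, h2, Real.cosh_eq]
  ring

lemma lintegral_line {p q : ℝ} (hp : 0 < p) (hq : 0 < q) :
    ∫⁻ x : ℝ, ENNReal.ofReal (Real.exp (-(p*x^2) - q/x^2) * |x|⁻¹) =
      2 * ENNReal.ofReal (besselK 0 (2 * Real.sqrt (p*q))) := by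
  set g : ℝ → ℝ≥0∞ := fun x => ENNReal.ofReal (Real.exp (-(p*x^2) - q/x^2) * |x|⁻¹) with hg
  have hIoi : ∫⁻ x in Set.Ioi (0:ℝ), g x =
      ENNReal.ofReal (besselK 0 (2 * Real.sqrt (p*q))) := by
    have : ∫⁻ x in Set.Ioi (0:ℝ), g x =
        ∫⁻ x in Set.Ioi (0:ℝ), ENNReal.ofReal (Real.exp (-(p*x^2) - q/x^2) * x⁻¹) := by
      refine setLIntegral_congr_fun measurableSet_Ioi
        (fun x hx => ?_)
      rw [hg]; simp only [abs_of_pos (show (0:ℝ) < x from hx)]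
    rw [this, lintegral_Ioi_subst hp hq,
      lintegral_real_exp_neg_cosh_two_mul (by positivity)]
  have hIio : ∫⁻ x in Set.Iio (0:ℝ), g x = ∫⁻ x in Set.Ioi (0:ℝ), g x := by
    have himg : Neg.neg '' Set.Ioi (0:ℝ) = Set.Iio 0 := by
      ext y; simp only [Set.mem_image, Set.mem_Ioi, Set.mem_Iio]
      exact ⟨fun ⟨x, hx, hxy⟩ => by rw [← hxy]; linarith, fun hy => ⟨-y, by linarith, by ring⟩⟩
    have h := lintegral_image_eq_lintegral_abs_deriv_mul' (f := Neg.neg)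
      (f' := fun _ => (-1:ℝ)) (s := Set.Ioi (0:ℝ)) measurableSet_Ioi
      (fun x _ => (hasDerivAt_neg x).hasDerivWithinAt)
      (fun a _ b _ hab => neg_injective hab) g
    rw [himg] at h
    rw [h]
    refine setLIntegral_congr_fun measurableSet_Ioi
      (fun x hx => ?_)
    rw [hg]
    simp only [abs_neg, abs_one, ENNReal.ofReal_one, one_mul, neg_neg]
    congr 2 <;> ring
  have hsplit := lintegral_add_compl (μ := volume) g (measurableSet_Ioi (a := (0:ℝ)))
  have hcompl : (Set.Ioi (0:ℝ))ᶜ = Set.Iic 0 := by simp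
  have : ∫⁻ x, g x = 2 * ENNReal.ofReal (besselK 0 (2 * Real.sqrt (p*q))) := by
    rw [← hsplit, hcompl, ← setLIntegral_congr (Iio_ae_eq_Iic (a := (0:ℝ))), hIio, hIoi]
    exact (two_mul _).symm
  exact this

lemma map_mul_prod (f1 f2 : ℝ → ℝ≥0∞) (hf1 : Measurable f1) (hf2 : Measurable f2) :
    Measure.map (fun p : ℝ × ℝ => p.1 * p.2)
      ((volume.withDensity f1).prod (volume.withDensity f2)) =
    volume.withDensity
      (fun z => ∫⁻ x, f1 x * f2 (z/x) * ENNReal.ofReal |x|⁻¹) := by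
  ext s hs
  rw [Measure.map_apply (f := fun p : ℝ × ℝ => p.1 * p.2) (measurable_fst.mul measurable_snd) hs, withDensity_apply _ hs]
  have hT : MeasurableSet ((fun p : ℝ × ℝ => p.1 * p.2) ⁻¹' s) :=
    (measurable_fst.mul measurable_snd) hs
  rw [Measure.prod_apply hT]
  set K : ℝ → ℝ≥0∞ := fun x => ∫⁻ y, s.indicator 1 (x*y) * f2 y with hK
  have hKval : ∀ x, (volume.withDensity f2) (Prod.mk x ⁻¹' ((fun p : ℝ × ℝ => p.1 * p.2) ⁻¹' s))
      = K x := by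
    intro x
    have hpre : Prod.mk x ⁻¹' ((fun p : ℝ × ℝ => p.1 * p.2) ⁻¹' s)
        = (fun y => x * y) ⁻¹' s := rfl
    have hms : MeasurableSet ((fun y => x * y) ⁻¹' s) := (measurable_const_mul x) hs
    rw [hpre, withDensity_apply _ hms, ← lintegral_indicator hms]
    refine lintegral_congr fun y => ?_
    by_cases hy : x * y ∈ s
    · simp [Set.indicator_of_mem, hy, Set.indicator_of_mem (show y ∈ (fun y => x*y) ⁻¹' s from hy)]
    · simp [Set.indicator_of_notMem, hy,
        Set.indicator_of_notMem (show y ∉ (fun y => x*y) ⁻¹' s from hy)]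
  simp only [hKval]
  have hKmeas : Measurable K := by
    apply Measurable.lintegral_prod_right
      (f := fun x y => s.indicator 1 (x*y) * f2 y)
    exact ((measurable_one.indicator hs).comp (measurable_fst.mul measurable_snd)).mul
      (hf2.comp measurable_snd)
  rw [lintegral_withDensity_eq_lintegral_mul _ hf1 hKmeas]
  set W : ℝ → ℝ → ℝ≥0∞ :=
    fun x z => f1 x * f2 (z/x) * ENNReal.ofReal |x|⁻¹ * s.indicator 1 z with hW
  have hWmeas : Measurable (Function.uncurry W) := by
    apply Measurable.mul
    · apply Measurable.mul
      · exact (hf1.comp measurable_fst).mul (hf2.comp (measurable_snd.div measurable_fst))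
      · exact (measurable_fst.abs.inv).ennreal_ofReal
    · exact (measurable_one.indicator hs).comp measurable_snd
  have hae : (fun x => f1 x * K x) =ᵐ[volume] fun x => ∫⁻ z, W x z := by
    filter_upwards [compl_mem_ae_iff.mpr (volume_singleton (a := (0:ℝ)))] with x hx
    have hx0 : x ≠ 0 := hx
    have hHmeas : Measurable (fun z => s.indicator (1 : ℝ → ℝ≥0∞) z * f2 (z/x)) :=
      (measurable_one.indicator hs).mul (hf2.comp (measurable_id.div_const x))
    have step1 : K x = ∫⁻ y, (fun z => s.indicator 1 z * f2 (z/x)) (x * y) := by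
      refine lintegral_congr fun y => ?_
      simp only [mul_div_cancel_left₀ _ hx0]
    have step2 : ∫⁻ y, (fun z => s.indicator 1 z * f2 (z/x)) (x * y)
        = ENNReal.ofReal |x⁻¹| * ∫⁻ z, s.indicator 1 z * f2 (z/x) := by
      rw [← lintegral_map hHmeas (measurable_const_mul x), Real.map_volume_mul_left hx0,
        lintegral_smul_measure, smul_eq_mul]
    rw [step1, step2, ← lintegral_const_mul _ hHmeas, ← lintegral_const_mul _ (hHmeas.const_mul _)]
    refine lintegral_congr fun z => ?_
    rw [hW]
    simp only [abs_inv]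
    ring
  simp only [Pi.mul_apply]
  rw [lintegral_congr_ae hae, lintegral_lintegral_swap hWmeas.aemeasurable]
  have hinner : ∀ z, ∫⁻ x, W x z
      = s.indicator (fun z => ∫⁻ x, f1 x * f2 (z/x) * ENNReal.ofReal |x|⁻¹) z := by
    intro z
    by_cases hz : z ∈ s
    · rw [Set.indicator_of_mem hz]
      refine lintegral_congr fun x => ?_
      rw [hW]; simp [Set.indicator_of_mem hz]
    · rw [Set.indicator_of_notMem hz]
      have : ∀ x, W x z = 0 := by
        intro x; rw [hW]; simp [Set.indicator_of_notMem hz]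
      simp [this]
  simp only [hinner]
  rw [lintegral_indicator hs]

/-- If `X₁ ~ N(0, σ₁²)` and `X₂ ~ N(0, σ₂²)` are independent, then the product
`Z = X₁X₂` has density `f_Z(z) = (1/(π σ₁ σ₂)) K₀(|z|/(σ₁σ₂))`. -/
theorem product_gaussian_density {Ω : Type*} [MeasurableSpace Ω] (μ : Measure Ω)
    [IsProbabilityMeasure μ] (σ1 σ2 : NNReal) (h1 : 0 < σ1) (h2 : 0 < σ2)
    (X1 X2 : Ω → ℝ) (hm1 : Measurable X1) (hm2 : Measurable X2)
    (hInd : IndepFun X1 X2 μ)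
    (hX1 : Measure.map X1 μ = gaussianReal 0 (σ1^2))
    (hX2 : Measure.map X2 μ = gaussianReal 0 (σ2^2)) :
    Measure.map (fun ω => X1 ω * X2 ω) μ =
      volume.withDensity (fun z => ENNReal.ofReal
        ((1 / (π * (σ1 : ℝ) * (σ2 : ℝ))) * besselK 0 (|z| / ((σ1 : ℝ) * (σ2 : ℝ))))) := by
  set a : ℝ := (σ1 : ℝ) with ha'
  set b : ℝ := (σ2 : ℝ) with hb'
  have ha : 0 < a := h1
  have hb : 0 < b := h2
  have hv1 : (σ1^2 : NNReal) ≠ 0 := pow_ne_zero _ h1.ne'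
  have hv2 : (σ2^2 : NNReal) ≠ 0 := pow_ne_zero _ h2.ne'
  have hjoint : Measure.map (fun ω => (X1 ω, X2 ω)) μ
      = (volume.withDensity (gaussianPDF 0 (σ1^2))).prod
        (volume.withDensity (gaussianPDF 0 (σ2^2))) := by
    rw [(indepFun_iff_map_prod_eq_prod_map_map hm1.aemeasurable hm2.aemeasurable).mp hInd,
      hX1, hX2, gaussianReal_of_var_ne_zero _ hv1, gaussianReal_of_var_ne_zero _ hv2]
  have hmul : Measure.map (fun ω => X1 ω * X2 ω) μ
      = Measure.map (fun p : ℝ × ℝ => p.1 * p.2) (Measure.map (fun ω => (X1 ω, X2 ω)) μ) := by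
    rw [Measure.map_map (g := fun p : ℝ × ℝ => p.1 * p.2) (measurable_fst.mul measurable_snd) (hm1.prodMk hm2)]
    rfl
  have hmeas1 : Measurable (gaussianPDF 0 (σ1^2)) :=
    (measurable_gaussianPDFReal _ _).ennreal_ofReal
  have hmeas2 : Measurable (gaussianPDF 0 (σ2^2)) :=
    (measurable_gaussianPDFReal _ _).ennreal_ofReal
  rw [hmul, hjoint, map_mul_prod _ _ hmeas1 hmeas2]
  apply withDensity_congr_ae
  filter_upwards [compl_mem_ae_iff.mpr (volume_singleton (a := (0:ℝ)))] with z hz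
  have hz0 : z ≠ 0 := hz
  -- constants
  set p : ℝ := 1 / (2*a^2) with hp'
  set q : ℝ := z^2 / (2*b^2) with hq'
  have hp : 0 < p := by positivity
  have hq : 0 < q := by rw [hq']; positivity
  set C : ℝ := (Real.sqrt (2*π*a^2))⁻¹ * (Real.sqrt (2*π*b^2))⁻¹ with hC'
  have hCpos : 0 < C := by
    have : (0:ℝ) < 2*π*a^2 := by positivity
    positivity
  -- pointwise rewriting of the integrand
  have hpoint : ∀ x : ℝ, gaussianPDF 0 (σ1^2) x * gaussianPDF 0 (σ2^2) (z/x)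
      * ENNReal.ofReal |x|⁻¹
      = ENNReal.ofReal C * ENNReal.ofReal (Real.exp (-(p*x^2) - q/x^2) * |x|⁻¹) := by
    intro x
    rcases eq_or_ne x 0 with rfl | hx
    · simp
    · unfold gaussianPDF gaussianPDFReal
      rw [← ENNReal.ofReal_mul (by positivity), ← ENNReal.ofReal_mul (by positivity),
        ← ENNReal.ofReal_mul hCpos.le]
      congr 1
      have hca : ((σ1^2 : NNReal) : ℝ) = a^2 := by push_cast; ring
      have hcb : ((σ2^2 : NNReal) : ℝ) = b^2 := by push_cast; ring
      rw [hca, hcb, sub_zero, sub_zero, hC']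
      have harg : Real.exp (-(p*x^2) - q/x^2)
          = Real.exp (-x ^ 2 / (2 * a^2)) * Real.exp (-(z/x) ^ 2 / (2 * b^2)) := by
        rw [← Real.exp_add]
        congr 1
        rw [hp', hq', div_pow]
        field_simp
        ring
      rw [harg]
      ring
  simp only [hpoint]
  have hEmeas : Measurable (fun x : ℝ => ENNReal.ofReal (Real.exp (-(p*x^2) - q/x^2) * |x|⁻¹)) := by
    fun_prop
  rw [lintegral_const_mul _ hEmeas, lintegral_line hp hq]
  have hsq : 2 * Real.sqrt (p*q) = |z| / (a*b) := by
    have : p * q = (|z| / (2*(a*b)))^2 := by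
      rw [hp', hq', div_pow, sq_abs]
      field_simp
    rw [this, Real.sqrt_sq (by positivity)]
    field_simp
  have hconst : 2 * C = 1 / (π * a * b) := by
    rw [hC']
    have h2a : Real.sqrt (2*π*a^2) = Real.sqrt (2*π) * a := by
      rw [Real.sqrt_mul (by positivity), Real.sqrt_sq ha.le]
    have h2b : Real.sqrt (2*π*b^2) = Real.sqrt (2*π) * b := by
      rw [Real.sqrt_mul (by positivity), Real.sqrt_sq hb.le]
    have hs : Real.sqrt (2*π) * Real.sqrt (2*π) = 2*π :=
      Real.mul_self_sqrt (by positivity)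
    have hinv : (Real.sqrt (2*π))⁻¹ * (Real.sqrt (2*π))⁻¹ = (2*π)⁻¹ := by
      rw [← mul_inv, hs]
    calc 2 * ((Real.sqrt (2*π*a^2))⁻¹ * (Real.sqrt (2*π*b^2))⁻¹)
        = 2 * (((Real.sqrt (2*π))⁻¹ * (Real.sqrt (2*π))⁻¹) * (a⁻¹*b⁻¹)) := by
          rw [h2a, h2b]; ring
      _ = 2 * ((2*π)⁻¹ * (a⁻¹*b⁻¹)) := by rw [hinv]
      _ = 1 / (π * a * b) := by
          field_simp
  have hC2 : C * 2 = 1 / (π * a * b) := by rw [mul_comm]; exact hconst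
  rw [hsq, ← mul_assoc, ← ENNReal.ofReal_ofNat, ← ENNReal.ofReal_mul hCpos.le, hC2,
    ← ENNReal.ofReal_mul (by positivity)]
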